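/- Suppose v_1, …, v_n ∈ ℝ^n are eigenvectors of M with M v_k = λ_k v_k, v_1 = 𝟙 (with λ_1 = 1), and v_k^T Π v_l = δ_{kl}. Fix t ∈ ℝ and define node vectors x_i ∈ ℝ^{n−1} with k-th component (1 ≤ k ≤ n−1) equal to π_i v_{k+1,i}, and the (possibly indefinite) quadratic form q(y) = Σ_{k=1}^{n−1} (1 − t(1−λ_{k+1})) y_k² on ℝ^{n−1}. Then for every partition g = {g_1, …, g_c} of {1, …, n}, the linearized Markov Stability r_lin(t,g) := Σ_{s=1}^{c} Σ_{i,j ∈ g_s} B_lin(t)_{ij} satisfies r_lin(t,g) = Σ_{s=1}^{c} q(Σ_{i ∈ g_s} x_i); i.e., maximizing the linearized Markov Stability (equivalently, minimizing the Reichardt–Bornholdt Potts Hamiltonian) is a vector partitioning problem in a pseudo-Euclidean space. -/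

import Mathlib

open Matrix

/-- With `Π`-orthonormal eigenvectors `v_1=𝟙, v_2, …, v_n` of `M`,
node vectors `x_i ∈ ℝ^{n−1}` with components `π_i v_{k+1,i}`, and the indefinite
quadratic form `q(y) = ∑_k (1 − t(1−λ_{k+1})) y_k²`, the linearized Markov
Stability of any partition satisfies
`∑_s ∑_{i,j∈g_s} B_lin(t)_{ij} = ∑_s q(∑_{i∈g_s} x_i)`.
(The graph has `n+1` vertices, so the node vectors live in `ℝ^n`.) -/
theorem stmt_17 (n : ℕ) (A : Matrix (Fin (n+1)) (Fin (n+1)) ℝ)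
    (hAsymm : A.IsSymm) (hAnonneg : ∀ i j, 0 ≤ A i j)
    (d : Fin (n+1) → ℝ) (hd : ∀ i, d i = ∑ j, A i j) (hdpos : ∀ i, 0 < d i)
    (m : ℝ) (hm : m = (∑ i, ∑ j, A i j) / 2)
    (M : Matrix (Fin (n+1)) (Fin (n+1)) ℝ) (hM : M = (Matrix.diagonal d)⁻¹ * A)
    (Pi : Matrix (Fin (n+1)) (Fin (n+1)) ℝ)
    (hPi : Pi = (2 * m)⁻¹ • Matrix.diagonal d)
    (Blin : ℝ → Matrix (Fin (n+1)) (Fin (n+1)) ℝ)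
    (hBlin : ∀ t, Blin t =
      Pi * ((1 - t) • (1 : Matrix (Fin (n+1)) (Fin (n+1)) ℝ) + t • M) -
        Matrix.vecMulVec (fun i => d i / (2 * m)) (fun j => d j / (2 * m)))
    (v : Fin (n+1) → Fin (n+1) → ℝ) (lam : Fin (n+1) → ℝ)
    (hv : ∀ k, M.mulVec (v k) = lam k • v k)
    (hv1 : v 0 = fun _ => (1 : ℝ)) (hlam1 : lam 0 = 1)
    (horth : ∀ k l, (v k) ⬝ᵥ Pi.mulVec (v l) = if k = l then 1 else 0)
    (t : ℝ) (x : Fin (n+1) → Fin n → ℝ)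
    (hx : ∀ i k, x i k = (d i / (2 * m)) * v k.succ i)
    (q : (Fin n → ℝ) → ℝ)
    (hq : ∀ y, q y = ∑ k : Fin n, (1 - t * (1 - lam k.succ)) * (y k) ^ 2)
    (c : ℕ) (g : Fin c → Finset (Fin (n+1)))
    (hdisj : ∀ s s' : Fin c, s ≠ s' → Disjoint (g s) (g s'))
    (hcover : Finset.univ.biUnion g = (Finset.univ : Finset (Fin (n+1)))) :
    ∑ s : Fin c, ∑ i ∈ g s, ∑ j ∈ g s, Blin t i j =
      ∑ s : Fin c, q (∑ i ∈ g s, x i) := by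
  classical
  set V : Matrix (Fin (n+1)) (Fin (n+1)) ℝ := Matrix.of (fun i k => v k i) with hV
  set cc : Fin (n+1) → ℝ := fun k => 1 - t * (1 - lam k) with hcc
  set W : Matrix (Fin (n+1)) (Fin (n+1)) ℝ :=
    Pi * ((1 - t) • (1 : Matrix (Fin (n+1)) (Fin (n+1)) ℝ) + t • M) with hW
  -- orthonormality in matrix form
  have hPV : Vᵀ * Pi * V = 1 := by
    ext k l
    rw [Matrix.mul_assoc, Matrix.mul_apply, Matrix.one_apply, ← horth k l, dotProduct]
    refine Finset.sum_congr rfl fun i _ => ?_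
    rw [Matrix.transpose_apply, Matrix.mul_apply]
    simp only [Matrix.mulVec, dotProduct, hV, Matrix.of_apply]
  have hVP : V * (Vᵀ * Pi) = 1 := by
    rw [mul_eq_one_comm]
    exact hPV
  -- eigen relation in matrix form
  have hMV : M * V = V * Matrix.diagonal lam := by
    ext i k
    have h := congrFun (hv k) i
    simp only [Matrix.mulVec, dotProduct, Pi.smul_apply, smul_eq_mul] at h
    rw [Matrix.mul_diagonal, Matrix.mul_apply]
    simp only [hV, Matrix.of_apply]
    rw [h]; simp [mul_comm]
  have hWV : W * V = Pi * V * Matrix.diagonal cc := by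
    rw [hW, Matrix.mul_assoc, Matrix.add_mul, Matrix.smul_mul, Matrix.smul_mul,
      Matrix.one_mul, hMV, Matrix.mul_assoc]
    congr 1
    ext i k
    simp only [Matrix.add_apply, Matrix.smul_apply, Matrix.mul_diagonal, hV,
      Matrix.of_apply, smul_eq_mul, hcc]
    ring
  have hWfull : W = Pi * V * (Matrix.diagonal cc * (Vᵀ * Pi)) := by
    calc W = W * (V * (Vᵀ * Pi)) := by rw [hVP, Matrix.mul_one]
    _ = W * V * (Vᵀ * Pi) := (Matrix.mul_assoc W V _).symm
    _ = Pi * V * Matrix.diagonal cc * (Vᵀ * Pi) := by rw [hWV]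
    _ = Pi * V * (Matrix.diagonal cc * (Vᵀ * Pi)) := by rw [Matrix.mul_assoc]
  -- entrywise formula for W
  have hWentry : ∀ i j, W i j =
      ∑ k : Fin (n+1), cc k * ((d i / (2*m)) * v k i) * ((d j / (2*m)) * v k j) := by
    intro i j
    rw [hWfull, Matrix.mul_apply]
    refine Finset.sum_congr rfl fun k _ => ?_
    have h1 : (Pi * V) i k = (2*m)⁻¹ * (d i * v k i) := by
      rw [hPi, Matrix.smul_mul, Matrix.smul_apply, Matrix.diagonal_mul, smul_eq_mul]
      rfl
    have h2 : (Matrix.diagonal cc * (Vᵀ * Pi)) k j = cc k * ((2*m)⁻¹ * (v k j * d j)) := by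
      rw [Matrix.diagonal_mul, hPi, Matrix.mul_smul, Matrix.smul_apply,
        Matrix.mul_diagonal, smul_eq_mul]
      rfl
    rw [h1, h2, div_eq_mul_inv, div_eq_mul_inv]
    ring
  -- entrywise spectral formula for Blin
  have key : ∀ i j, Blin t i j =
      ∑ k : Fin n, (1 - t * (1 - lam k.succ)) * (x i k * x j k) := by
    intro i j
    rw [hBlin, Matrix.sub_apply, ← hW, hWentry, Matrix.vecMulVec_apply,
      Fin.sum_univ_succ]
    have h0 : cc 0 = 1 := by simp [hcc, hlam1]
    have hv0i : v 0 i = 1 := by rw [hv1]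
    have hv0j : v 0 j = 1 := by rw [hv1]
    rw [h0, hv0i, hv0j]
    have hsum : ∑ k : Fin n, cc k.succ * ((d i / (2*m)) * v k.succ i) *
        ((d j / (2*m)) * v k.succ j)
        = ∑ k : Fin n, (1 - t * (1 - lam k.succ)) * (x i k * x j k) :=
      Finset.sum_congr rfl fun k _ => by rw [hx, hx]; simp only [hcc]; ring
    rw [hsum]
    ring
  -- per-block identity
  refine Finset.sum_congr rfl fun s _ => ?_
  rw [hq]
  calc ∑ i ∈ g s, ∑ j ∈ g s, Blin t i j
      = ∑ i ∈ g s, ∑ j ∈ g s, ∑ k : Fin n,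
          (1 - t * (1 - lam k.succ)) * (x i k * x j k) := by
        exact Finset.sum_congr rfl fun i _ => Finset.sum_congr rfl fun j _ => key i j
    _ = ∑ i ∈ g s, ∑ k : Fin n, ∑ j ∈ g s,
          (1 - t * (1 - lam k.succ)) * (x i k * x j k) :=
        Finset.sum_congr rfl fun i _ => Finset.sum_comm
    _ = ∑ k : Fin n, ∑ i ∈ g s, ∑ j ∈ g s,
          (1 - t * (1 - lam k.succ)) * (x i k * x j k) := Finset.sum_comm
    _ = ∑ k : Fin n, (1 - t * (1 - lam k.succ)) * ((∑ i ∈ g s, x i) k) ^ 2 := by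
        refine Finset.sum_congr rfl fun k _ => ?_
        rw [Finset.sum_apply, sq, Finset.sum_mul_sum, Finset.mul_sum]
        refine Finset.sum_congr rfl fun i _ => ?_
        rw [Finset.mul_sum]
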